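/- Let n ≥ 2 and let σ be a derangement of {1,…,n}. Then the map φ : H_n → G_n is not injective when derangements with a cycle of length ≥ 3 exist; more precisely, |{τ ∈ H_n : φ(τ) = φ(σ)}| = 2^{t(σ) − s(σ)}, where t(σ) is the number of cycles in the disjoint cycle decomposition of σ (the cardinality of the cycle type of σ) and s(σ) is the number of cycles of σ of length exactly 2. -/

import Mathlib

attribute [local instance] Classical.propDecidable

/-- `G_n` is realized additively as the group of `ℤ`-valued functions on unordered
pairs from `{1,…,n}`; `pgen n i j` is the generator `p_{i,j} = p_{j,i}`. -/
noncomputable def pgen (n : ℕ) (i j : Fin n) : Sym2 (Fin n) → ℤ :=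
  Pi.single s(i, j) 1

/-- `φ(σ) = ∏_i p_{i,σ(i)}` (written additively). -/
noncomputable def phi (n : ℕ) (σ : Equiv.Perm (Fin n)) : Sym2 (Fin n) → ℤ :=
  ∑ i : Fin n, pgen n i (σ i)

@[simp] theorem Equiv.Perm.apply_inv_self {α : Type*} (f : Equiv.Perm α) (x : α) : f (f⁻¹ x) = x :=
  f.apply_symm_apply x

section Aux
variable {n : ℕ}

lemma pgen_symm (n : ℕ) (a b : Fin n) : pgen n a b = pgen n b a := by
  unfold pgen; rw [Sym2.eq_swap]

lemma phi_apply (σ : Equiv.Perm (Fin n)) (e : Sym2 (Fin n)) :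
    phi n σ e = ((Finset.univ.filter fun i => s(i, σ i) = e).card : ℤ) := by
  classical
  simp [phi, pgen, Finset.sum_apply, Pi.single_apply, eq_comm]

lemma choice_lemma {σ τ : Equiv.Perm (Fin n)} (hφ : phi n τ = phi n σ) (i : Fin n) :
    τ i = σ i ∨ τ i = σ⁻¹ i := by
  classical
  set e := s(i, τ i) with he
  have h2 : phi n σ e = phi n τ e := by rw [hφ]
  rw [phi_apply, phi_apply] at h2
  have h1 : 0 < (Finset.univ.filter fun j => s(j, τ j) = e).card :=
    Finset.card_pos.mpr ⟨i, by simp [he]⟩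
  have hc : (Finset.univ.filter fun j => s(j, σ j) = e).card
      = (Finset.univ.filter fun j => s(j, τ j) = e).card := by exact_mod_cast h2
  have h3 : 0 < (Finset.univ.filter fun j => s(j, σ j) = e).card := by omega
  obtain ⟨j, hj⟩ := Finset.card_pos.mp h3
  simp only [Finset.mem_filter, Finset.mem_univ, true_and, he] at hj
  rcases Sym2.eq_iff.mp hj with ⟨h, h'⟩ | ⟨h, h'⟩
  · left; rw [← h', h]
  · right
    subst h
    exact Equiv.Perm.eq_inv_iff_eq.mpr h'

lemma no_backtrack {σ τ : Equiv.Perm (Fin n)} (hσ : ∀ i, σ i ≠ i)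
    (hφ : phi n τ = phi n σ) {i : Fin n} (h2 : σ (σ i) ≠ i)
    (h1 : τ i = σ i) (h3 : τ (σ i) = i) : False := by
  classical
  set e := s(i, σ i) with he
  have hcσ : (Finset.univ.filter fun j => s(j, σ j) = e).card = 1 := by
    rw [Finset.card_eq_one]
    refine ⟨i, ?_⟩
    ext j
    simp only [Finset.mem_filter, Finset.mem_univ, true_and, Finset.mem_singleton, he]
    constructor
    · intro hj
      rcases Sym2.eq_iff.mp hj with ⟨h, h'⟩ | ⟨h, h'⟩
      · exact h
      · exact absurd (h ▸ h') h2
    · rintro rfl; rfl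
  have hsub : ({i, σ i} : Finset (Fin n)) ⊆
      Finset.univ.filter fun j => s(j, τ j) = e := by
    intro j hj
    simp only [Finset.mem_insert, Finset.mem_singleton] at hj
    rcases hj with rfl | rfl
    · simp [h1, he]
    · simp only [Finset.mem_filter, Finset.mem_univ, true_and, h3, he]
      exact Sym2.eq_swap
  have hcτ : 2 ≤ (Finset.univ.filter fun j => s(j, τ j) = e).card := by
    calc 2 = ({i, σ i} : Finset (Fin n)).card := (Finset.card_pair (Ne.symm (hσ i))).symm
    _ ≤ _ := Finset.card_le_card hsub
  have h4 := congrFun hφ e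
  rw [phi_apply, phi_apply, hcσ] at h4
  have : (Finset.univ.filter fun j => s(j, τ j) = e).card = 1 := by exact_mod_cast h4
  omega

lemma step_lemma {σ τ : Equiv.Perm (Fin n)} (hσ : ∀ i, σ i ≠ i)
    (hφ : phi n τ = phi n σ) {i : Fin n} (h2 : σ (σ i) ≠ i) (h1 : τ i = σ i) :
    τ (σ i) = σ (σ i) := by
  rcases choice_lemma hφ (σ i) with h | h
  · exact h
  · exfalso
    exact no_backtrack hσ hφ h2 h1 (by rw [h]; simp)

lemma agree_lemma {σ τ : Equiv.Perm (Fin n)} (hσ : ∀ i, σ i ≠ i)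
    (hφ : phi n τ = phi n σ) {b : Fin n}
    (hlong : ∀ j, σ.SameCycle b j → σ (σ j) ≠ j) (h0 : τ b = σ b)
    {x : Fin n} (hx : σ.SameCycle b x) : τ x = σ x := by
  have key : ∀ k : ℕ, τ ((σ ^ k) b) = σ ((σ ^ k) b) := by
    intro k
    induction k with
    | zero => simpa using h0
    | succ k ih =>
      have hsc : σ.SameCycle b ((σ ^ k) b) := ⟨(k : ℤ), by simp⟩
      have hst := step_lemma hσ hφ (hlong _ hsc) ih
      simpa [pow_succ'] using hst
  obtain ⟨k, -, hk⟩ := hx.exists_pow_eq'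
  rw [← hk]
  exact key k

lemma phi_inv (σ : Equiv.Perm (Fin n)) : phi n σ⁻¹ = phi n σ := by
  unfold phi
  refine Fintype.sum_equiv σ⁻¹ _ _ (fun x => ?_)
  simp only [Equiv.Perm.apply_inv_self]
  exact pgen_symm n x (σ⁻¹ x)

lemma cycleOf_inv_apply (σ : Equiv.Perm (Fin n)) (i : Fin n) :
    σ.cycleOf (σ⁻¹ i) = σ.cycleOf i := by
  conv_rhs => rw [← Equiv.Perm.apply_inv_self σ i, Equiv.Perm.cycleOf_self_apply]

noncomputable def mixPerm (n : ℕ) (σ : Equiv.Perm (Fin n))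
    (ε : Equiv.Perm (Fin n) → Bool) : Equiv.Perm (Fin n) where
  toFun i := if ε (σ.cycleOf i) then σ i else σ⁻¹ i
  invFun i := if ε (σ.cycleOf i) then σ⁻¹ i else σ i
  left_inv i := by
    by_cases h : ε (σ.cycleOf i)
    · simp [h, Equiv.Perm.cycleOf_self_apply]
    · simp [h, cycleOf_inv_apply, -Equiv.Perm.coe_inv]
  right_inv i := by
    by_cases h : ε (σ.cycleOf i)
    · simp [h, cycleOf_inv_apply, -Equiv.Perm.coe_inv]
    · simp [h, Equiv.Perm.cycleOf_self_apply]

lemma mixPerm_apply (σ : Equiv.Perm (Fin n)) (ε : Equiv.Perm (Fin n) → Bool) (i : Fin n) :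
    mixPerm n σ ε i = if ε (σ.cycleOf i) then σ i else σ⁻¹ i := rfl

noncomputable def reixPerm (n : ℕ) (σ : Equiv.Perm (Fin n))
    (ε : Equiv.Perm (Fin n) → Bool) : Equiv.Perm (Fin n) where
  toFun i := if ε (σ.cycleOf i) then i else σ⁻¹ i
  invFun i := if ε (σ.cycleOf i) then i else σ i
  left_inv i := by
    by_cases h : ε (σ.cycleOf i)
    · simp [h]
    · simp [h, cycleOf_inv_apply, -Equiv.Perm.coe_inv]
  right_inv i := by
    by_cases h : ε (σ.cycleOf i)
    · simp [h]
    · simp [h, Equiv.Perm.cycleOf_self_apply]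

lemma phi_mixPerm (σ : Equiv.Perm (Fin n)) (ε : Equiv.Perm (Fin n) → Bool) :
    phi n (mixPerm n σ ε) = phi n σ := by
  unfold phi
  refine Fintype.sum_equiv (reixPerm n σ ε) _ _ (fun x => ?_)
  show pgen n x (mixPerm n σ ε x) = pgen n (reixPerm n σ ε x) (σ (reixPerm n σ ε x))
  rw [mixPerm_apply]
  show _ = pgen n (if ε (σ.cycleOf x) then x else σ⁻¹ x) (σ (if ε (σ.cycleOf x) then x else σ⁻¹ x))
  by_cases h : ε (σ.cycleOf x)
  · simp [h]
  · simp only [h, if_false, Bool.false_eq_true, Equiv.Perm.apply_inv_self]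
    exact pgen_symm n x (σ⁻¹ x)

lemma mixPerm_ne (σ : Equiv.Perm (Fin n)) (hσ : ∀ i, σ i ≠ i)
    (ε : Equiv.Perm (Fin n) → Bool) (i : Fin n) : mixPerm n σ ε i ≠ i := by
  rw [mixPerm_apply]
  split
  · exact hσ i
  · intro h
    have h2 := congrArg σ h
    rw [Equiv.Perm.apply_inv_self] at h2
    exact hσ i h2.symm

lemma sq_ne_of_long {σ c : Equiv.Perm (Fin n)} (hc : c ∈ σ.cycleFactorsFinset)
    (hcard : c.support.card ≠ 2) {j : Fin n} (hj : j ∈ c.support) : σ (σ j) ≠ j := by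
  intro h
  obtain ⟨hcyc, hagree⟩ := Equiv.Perm.mem_cycleFactorsFinset_iff.mp hc
  have h1 : c j = σ j := hagree j hj
  have hmem : σ j ∈ c.support := h1 ▸ Equiv.Perm.apply_mem_support.mpr hj
  have h2 : c (c j) = j := by rw [h1, hagree (σ j) hmem, h]
  have hpow : (c ^ 2) j = j := by
    rw [pow_two, Equiv.Perm.mul_apply, h2]
  have hone : c ^ 2 = 1 :=
    hcyc.pow_eq_one_iff.mpr ⟨j, Equiv.Perm.mem_support.mp hj, hpow⟩
  have hord : orderOf c ∣ 2 := orderOf_dvd_of_pow_eq_one hone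
  rw [hcyc.orderOf] at hord
  have h2le := hcyc.two_le_card_support
  have := Nat.le_of_dvd (by norm_num) hord
  omega

lemma sq_eq_of_short {σ c : Equiv.Perm (Fin n)} (hc : c ∈ σ.cycleFactorsFinset)
    (hcard : c.support.card = 2) {j : Fin n} (hj : j ∈ c.support) : σ (σ j) = j := by
  obtain ⟨hcyc, hagree⟩ := Equiv.Perm.mem_cycleFactorsFinset_iff.mp hc
  have h1 : c j = σ j := hagree j hj
  have hmem : σ j ∈ c.support := h1 ▸ Equiv.Perm.apply_mem_support.mpr hj
  have hone : c ^ 2 = 1 := by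
    rw [← hcard, ← hcyc.orderOf]; exact pow_orderOf_eq_one c
  have : (c ^ 2) j = j := by rw [hone]; rfl
  rw [pow_two, Equiv.Perm.mul_apply, h1, hagree (σ j) hmem] at this
  exact this

end Aux

/-- For a derangement `σ` of `{1,…,n}`, the number of derangements `τ` with
`φ(τ) = φ(σ)` is `2^{t(σ) − s(σ)}`, where `t(σ)` is the number of cycles of `σ`
and `s(σ)` the number of cycles of length exactly `2`. In particular `φ` is not
injective on derangements whenever a derangement has a cycle of length `≥ 3`. -/
theorem stmt_11 (n : ℕ) (hn : 2 ≤ n) (σ : Equiv.Perm (Fin n))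
    (hσ : ∀ i, σ i ≠ i) :
    (Finset.univ.filter fun τ : Equiv.Perm (Fin n) =>
        (∀ i, τ i ≠ i) ∧ phi n τ = phi n σ).card
      = 2 ^ (Multiset.card σ.cycleType - σ.cycleType.count 2) := by
  classical
  set F := σ.cycleFactorsFinset with hF
  set L := F.filter (fun c => c.support.card ≠ 2) with hL
  -- basepoints
  have hLsub : ∀ c ∈ L, c ∈ F := fun c hc => (Finset.mem_filter.mp hc).1
  have hLcard : ∀ c ∈ L, c.support.card ≠ 2 := fun c hc => (Finset.mem_filter.mp hc).2
  have hne : ∀ c ∈ L, c.support.Nonempty := by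
    intro c hc
    have := (Equiv.Perm.mem_cycleFactorsFinset_iff.mp (hLsub c hc)).1.two_le_card_support
    exact Finset.card_pos.mp (by omega)
  let pt : Equiv.Perm (Fin n) → Fin n := fun c =>
    if h : c.support.Nonempty then h.choose else (⟨0, by omega⟩ : Fin n)
  have pt_mem : ∀ c : Equiv.Perm (Fin n), c.support.Nonempty → pt c ∈ c.support := by
    intro c h
    simp only [pt, dif_pos h]
    exact h.choose_spec
  -- extension of a choice function on L
  let εext : (↥L → Bool) → (Equiv.Perm (Fin n) → Bool) := fun ε c =>
    if h : c ∈ L then ε ⟨c, h⟩ else false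
  have key : (Finset.univ.filter fun τ : Equiv.Perm (Fin n) =>
      (∀ i, τ i ≠ i) ∧ phi n τ = phi n σ).card
      = (Finset.univ : Finset (↥L → Bool)).card := by
    refine Finset.card_bij'
      (fun τ _ => (fun c : ↥L => decide (τ (pt c) = σ (pt c))))
      (fun ε _ => mixPerm n σ (εext ε)) (fun τ hτ => Finset.mem_univ _)
      (fun ε _ => ?memA) (fun τ hτ => ?left) (fun ε _ => ?right)
    case memA =>
      exact Finset.mem_filter.mpr ⟨Finset.mem_univ _,
        mixPerm_ne σ hσ (εext ε), phi_mixPerm σ (εext ε)⟩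
    case left =>
      obtain ⟨-, hτd, hτφ⟩ := Finset.mem_filter.mp hτ
      refine Equiv.ext fun i => ?_
      rw [mixPerm_apply]
      have hcF : σ.cycleOf i ∈ F :=
        Equiv.Perm.cycleOf_mem_cycleFactorsFinset_iff.mpr (Equiv.Perm.mem_support.mpr (hσ i))
      have hiF : i ∈ (σ.cycleOf i).support :=
        Equiv.Perm.mem_support_cycleOf_iff.mpr
          ⟨Equiv.Perm.SameCycle.refl _ _, Equiv.Perm.mem_support.mpr (hσ i)⟩
      by_cases hcL : σ.cycleOf i ∈ L
      · have hb : pt (σ.cycleOf i) ∈ (σ.cycleOf i).support :=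
          pt_mem _ (hne _ hcL)
        have hc' : σ.cycleOf i = σ.cycleOf (pt (σ.cycleOf i)) :=
          Equiv.Perm.cycle_is_cycleOf hb hcF
        have hlong : ∀ j, σ.SameCycle (pt (σ.cycleOf i)) j → σ (σ j) ≠ j := by
          intro j hj
          have hjsupp : j ∈ (σ.cycleOf i).support := by
            rw [hc', Equiv.Perm.mem_support_cycleOf_iff]
            refine ⟨hj, Equiv.Perm.mem_support.mpr (hσ _)⟩
          exact sq_ne_of_long hcF (hLcard _ hcL) hjsupp
        have hsci : σ.SameCycle (pt (σ.cycleOf i)) i := by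
          have h := hiF
          rw [hc', Equiv.Perm.mem_support_cycleOf_iff] at h
          exact h.1
        simp only [εext, dif_pos hcL]
        by_cases hdir : τ (pt (σ.cycleOf i)) = σ (pt (σ.cycleOf i))
        · rw [if_pos (by simp [hdir])]
          exact (agree_lemma hσ hτφ hlong hdir hsci).symm
        · rw [if_neg (by simp [hdir])]
          have h0 : τ (pt (σ.cycleOf i)) = σ⁻¹ (pt (σ.cycleOf i)) :=
            (choice_lemma hτφ _).resolve_left hdir
          have hσinv : ∀ j, σ⁻¹ j ≠ j := by
            intro j h
            have h2 := congrArg σ h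
            rw [Equiv.Perm.apply_inv_self] at h2
            exact hσ j h2.symm
          have hφinv : phi n τ = phi n σ⁻¹ := by rw [phi_inv]; exact hτφ
          have hlong' : ∀ j, σ⁻¹.SameCycle (pt (σ.cycleOf i)) j → σ⁻¹ (σ⁻¹ j) ≠ j := by
            intro j hj h
            refine hlong j (Equiv.Perm.sameCycle_inv.mp hj) ?_
            have h2 := congrArg σ (congrArg σ h)
            rw [Equiv.Perm.apply_inv_self, Equiv.Perm.apply_inv_self] at h2
            exact h2.symm
          exact (agree_lemma hσinv hφinv hlong' h0
            (Equiv.Perm.sameCycle_inv.mpr hsci)).symm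
      · have hcard : (σ.cycleOf i).support.card = 2 := by
          by_contra h
          exact hcL (Finset.mem_filter.mpr ⟨hcF, h⟩)
        have hsq : σ (σ i) = i := sq_eq_of_short hcF hcard hiF
        have hinv : σ⁻¹ i = σ i := by
          rw [Equiv.Perm.inv_eq_iff_eq]
          exact hsq.symm
        simp only [εext, dif_neg hcL, Bool.false_eq_true, if_false]
        rcases choice_lemma hτφ i with h | h
        · rw [hinv, h]
        · rw [h]
    case right =>
      funext c
      obtain ⟨c, hcL⟩ := c
      have hcF := hLsub c hcL
      have hb : pt c ∈ c.support := pt_mem c (hne c hcL)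
      have hc' : c = σ.cycleOf (pt c) := Equiv.Perm.cycle_is_cycleOf hb hcF
      show decide (mixPerm n σ (εext ε) (pt c) = σ (pt c)) = ε ⟨c, hcL⟩
      rw [mixPerm_apply, ← hc']
      simp only [εext, dif_pos hcL]
      have hsq : σ (σ (pt c)) ≠ pt c := sq_ne_of_long hcF (hLcard c hcL) hb
      have hne2 : σ⁻¹ (pt c) ≠ σ (pt c) := by
        intro h
        have h2 := congrArg σ h
        rw [Equiv.Perm.apply_inv_self] at h2
        exact hsq h2.symm
      cases hεc : ε ⟨c, hcL⟩
      · rw [if_neg (by simp [hεc])]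
        simpa using hne2
      · rw [if_pos (by simp [hεc])]
        simp
  rw [key]
  -- counting
  have hcount : (Finset.univ : Finset (↥L → Bool)).card = 2 ^ L.card := by
    rw [Finset.card_univ, Fintype.card_fun, Fintype.card_bool, Fintype.card_coe]
  rw [hcount]
  congr 1
  have h1 : Multiset.card σ.cycleType = F.card := by
    rw [Equiv.Perm.cycleType_def, Multiset.card_map]
    rfl
  have h2 : σ.cycleType.count 2 = (F.filter (fun c => c.support.card = 2)).card := by
    rw [Equiv.Perm.cycleType_def, Multiset.count_map]
    rw [Finset.card, Finset.filter_val]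
    congr 1
    apply Multiset.filter_congr
    intro x _
    simp [eq_comm, Function.comp]
  have h3 : (F.filter (fun c => c.support.card = 2)).card + L.card = F.card := by
    rw [hL]
    exact Finset.card_filter_add_card_filter_not _
  omega
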